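/- Let Γ, δ ∈ ℂ be nonzero with Γ·conj(δ) ≠ δ·conj(Γ), set α = conj(Γ)/(Γ·conj(δ) − δ·conj(Γ)) and β = conj(δ)/(Γ·conj(δ) − δ·conj(Γ)), let ω₊ ∈ ℂ be nonzero and ω₋ = conj(ω₊), and define φ₀₀(x,y) = exp(−(β ω₊/(2Γ)) x² + (δ/(2α ω₊)) y²). Then a₊ φ₀₀ = 0 identically on ℝ²; moreover a₋ φ₀₀ = 0 identically on ℝ² if and only if ω₊/ω₋ = −(δ Γ)/(conj(δ)·conj(Γ)). -/

import Mathlib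

open MeasureTheory

/-- Partial derivative in the `x`-direction of a function on `ℝ²`. -/
noncomputable def pdx (f : ℝ × ℝ → ℂ) : ℝ × ℝ → ℂ := fun p => fderiv ℝ f p (1, 0)

/-- Partial derivative in the `y`-direction of a function on `ℝ²`. -/
noncomputable def pdy (f : ℝ × ℝ → ℂ) : ℝ × ℝ → ℂ := fun p => fderiv ℝ f p (0, 1)

/-- `α = conj(Γ)/(Γ conj(δ) − δ conj(Γ))`. -/
noncomputable def alphaDHO (Γ δ : ℂ) : ℂ :=
  (starRingEnd ℂ) Γ / (Γ * (starRingEnd ℂ) δ - δ * (starRingEnd ℂ) Γ)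

/-- `β = conj(δ)/(Γ conj(δ) − δ conj(Γ))`. -/
noncomputable def betaDHO (Γ δ : ℂ) : ℂ :=
  (starRingEnd ℂ) δ / (Γ * (starRingEnd ℂ) δ - δ * (starRingEnd ℂ) Γ)

/-- `a f = √(ω/2)·[(βx + i(δ/ω)y) f + (Γ/ω) ∂ₓ f − iα ∂_y f]`, with the principal branch
of the complex square root (`cpow`).  Taking the parameters `(Γ, δ, ω₊)` gives `a₊`; taking
the conjugated parameters `(conj Γ, conj δ, ω₋)` gives `a₋`. -/
noncomputable def aDHO (Γ δ ω : ℂ) (f : ℝ × ℝ → ℂ) : ℝ × ℝ → ℂ := fun p =>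
  (ω / 2) ^ ((1 : ℂ) / 2) *
    ((betaDHO Γ δ * (p.1 : ℂ) + Complex.I * (δ / ω) * (p.2 : ℂ)) * f p +
      (Γ / ω) * pdx f p - Complex.I * alphaDHO Γ δ * pdy f p)


/-- `φ₀₀(x,y) = exp(−(β ω/(2Γ)) x² + (δ/(2α ω)) y²)`. -/
noncomputable def phi00DHO (Γ δ ω : ℂ) : ℝ × ℝ → ℂ := fun p =>
  Complex.exp (-(betaDHO Γ δ * ω / (2 * Γ)) * (p.1 : ℂ) ^ 2 +
    (δ / (2 * alphaDHO Γ δ * ω)) * (p.2 : ℂ) ^ 2)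

noncomputable def L1aux : (ℝ × ℝ) →L[ℝ] ℂ := Complex.ofRealCLM.comp (ContinuousLinearMap.fst ℝ ℝ ℝ)
noncomputable def L2aux : (ℝ × ℝ) →L[ℝ] ℂ := Complex.ofRealCLM.comp (ContinuousLinearMap.snd ℝ ℝ ℝ)

lemma hexp_aux (A B : ℂ) (p : ℝ × ℝ) :
    HasFDerivAt (fun p : ℝ × ℝ => Complex.exp (A * (p.1:ℂ)^2 + B * (p.2:ℂ)^2))
      (Complex.exp (A * (p.1:ℂ)^2 + B * (p.2:ℂ)^2) •
        ((2 * A * (p.1:ℂ)) • L1aux + (2 * B * (p.2:ℂ)) • L2aux)) p := by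
  have h1 : HasFDerivAt (fun p : ℝ × ℝ => ((p.1 : ℂ))) L1aux p := L1aux.hasFDerivAt
  have h2 : HasFDerivAt (fun p : ℝ × ℝ => ((p.2 : ℂ))) L2aux p := L2aux.hasFDerivAt
  have hg : HasFDerivAt (fun p : ℝ × ℝ => A * (p.1:ℂ)^2 + B * (p.2:ℂ)^2)
      ((2 * A * (p.1:ℂ)) • L1aux + (2 * B * (p.2:ℂ)) • L2aux) p := by
    have := ((h1.mul h1).const_mul A).add ((h2.mul h2).const_mul B)
    refine (this.congr_fderiv ?_).congr_of_eventuallyEq (Filter.Eventually.of_forall fun q => ?_)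
    · module
    · simp [sq]
  exact hg.cexp

lemma pdx_exp_aux (A B : ℂ) (p : ℝ × ℝ) :
    pdx (fun p : ℝ × ℝ => Complex.exp (A * (p.1:ℂ)^2 + B * (p.2:ℂ)^2)) p
      = (2 * A * (p.1:ℂ)) * Complex.exp (A * (p.1:ℂ)^2 + B * (p.2:ℂ)^2) := by
  rw [pdx, (hexp_aux A B p).fderiv]; simp [L1aux, L2aux]; ring

lemma pdy_exp_aux (A B : ℂ) (p : ℝ × ℝ) :
    pdy (fun p : ℝ × ℝ => Complex.exp (A * (p.1:ℂ)^2 + B * (p.2:ℂ)^2)) p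
      = (2 * B * (p.2:ℂ)) * Complex.exp (A * (p.1:ℂ)^2 + B * (p.2:ℂ)^2) := by
  rw [pdy, (hexp_aux A B p).fderiv]; simp [L1aux, L2aux]; ring

theorem statement18 (Γ δ ω : ℂ) (hΓ : Γ ≠ 0) (hδ : δ ≠ 0)
    (hΓδ : Γ * (starRingEnd ℂ) δ ≠ δ * (starRingEnd ℂ) Γ) (hω : ω ≠ 0) :
    (aDHO Γ δ ω (phi00DHO Γ δ ω) = 0) ∧
    (aDHO ((starRingEnd ℂ) Γ) ((starRingEnd ℂ) δ) ((starRingEnd ℂ) ω)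
        (phi00DHO Γ δ ω) = 0 ↔
      ω / (starRingEnd ℂ) ω =
        -(δ * Γ) / ((starRingEnd ℂ) δ * (starRingEnd ℂ) Γ)) := by
  have hD : Γ * (starRingEnd ℂ) δ - δ * (starRingEnd ℂ) Γ ≠ 0 := sub_ne_zero.mpr hΓδ
  have hΓ' : (starRingEnd ℂ) Γ ≠ 0 := by simpa using hΓ
  have hδ' : (starRingEnd ℂ) δ ≠ 0 := by simpa using hδ
  have hω' : (starRingEnd ℂ) ω ≠ 0 := by simpa using hω
  have hα : alphaDHO Γ δ ≠ 0 := div_ne_zero hΓ' hD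
  set A : ℂ := -(betaDHO Γ δ * ω / (2 * Γ)) with hA
  set B : ℂ := δ / (2 * alphaDHO Γ δ * ω) with hB
  have hphi : phi00DHO Γ δ ω =
      fun p : ℝ × ℝ => Complex.exp (A * (p.1:ℂ)^2 + B * (p.2:ℂ)^2) := rfl
  constructor
  · funext p
    rw [aDHO, hphi, pdx_exp_aux, pdy_exp_aux]
    have key1 : betaDHO Γ δ + (Γ / ω) * (2 * A) = 0 := by
      rw [hA, betaDHO]; field_simp; ring
    have key2 : Complex.I * (δ / ω) - Complex.I * alphaDHO Γ δ * (2 * B) = 0 := by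
      rw [hB]; field_simp; ring
    have hre : (betaDHO Γ δ * (p.1:ℂ) + Complex.I * (δ / ω) * (p.2:ℂ)) *
          Complex.exp (A * (p.1:ℂ)^2 + B * (p.2:ℂ)^2) +
        Γ / ω * (2 * A * (p.1:ℂ) * Complex.exp (A * (p.1:ℂ)^2 + B * (p.2:ℂ)^2)) -
        Complex.I * alphaDHO Γ δ * (2 * B * (p.2:ℂ) * Complex.exp (A * (p.1:ℂ)^2 + B * (p.2:ℂ)^2))
        = ((betaDHO Γ δ + (Γ / ω) * (2 * A)) * (p.1:ℂ) +
           (Complex.I * (δ / ω) - Complex.I * alphaDHO Γ δ * (2 * B)) * (p.2:ℂ)) *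
          Complex.exp (A * (p.1:ℂ)^2 + B * (p.2:ℂ)^2) := by ring
    rw [Pi.zero_apply, hre, key1, key2]
    ring
  · set Γ' := (starRingEnd ℂ) Γ with hΓ'eq
    set δ' := (starRingEnd ℂ) δ with hδ'eq
    set ω' := (starRingEnd ℂ) ω with hω'eq
    have hc : (ω' / 2 : ℂ) ^ ((1:ℂ)/2) ≠ 0 := by
      simp [Complex.cpow_eq_zero_iff, div_eq_zero_iff, hω']
    have hβ' : betaDHO Γ' δ' = δ / (Γ' * δ - δ' * Γ) := by
      simp [betaDHO, hΓ'eq, hδ'eq, Complex.conj_conj]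
    have hα' : alphaDHO Γ' δ' = Γ / (Γ' * δ - δ' * Γ) := by
      simp [alphaDHO, hΓ'eq, hδ'eq, Complex.conj_conj]
    have hβval : betaDHO Γ δ = δ' / (Γ * δ' - δ * Γ') := rfl
    have hαval : alphaDHO Γ δ = Γ' / (Γ * δ' - δ * Γ') := rfl
    have hD' : Γ' * δ - δ' * Γ ≠ 0 := by
      intro h
      apply hD
      have h2 := congrArg (starRingEnd ℂ) h
      rw [map_sub, map_mul, map_mul, map_zero] at h2
      rw [Complex.conj_conj, Complex.conj_conj, ← hδ'eq, ← hΓ'eq] at h2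
      linear_combination h2
    have hE1 : δ * Γ' - δ' * Γ ≠ 0 := fun h => hD' (by linear_combination h)
    have hE2 : δ' * Γ - δ * Γ' ≠ 0 := fun h => hD (by linear_combination h)
    constructor
    · intro h
      have h1 := congrFun h (1, 0)
      rw [aDHO, hphi, pdx_exp_aux, pdy_exp_aux, Pi.zero_apply] at h1
      norm_num at h1
      have h1' := h1.resolve_left hω'
      have h3 : (betaDHO Γ' δ' + (Γ' / ω') * (2 * A)) * Complex.exp A = 0 := by
        linear_combination h1'
      have hK : betaDHO Γ' δ' + (Γ' / ω') * (2 * A) = 0 :=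
        (mul_eq_zero.mp h3).resolve_right (Complex.exp_ne_zero A)
      rw [hβ', hA, hβval] at hK
      rw [div_eq_div_iff hω' (mul_ne_zero hδ' hΓ')]
      field_simp at hK
      have h4 : (Γ * δ' - δ * Γ') * (2 * (δ' * Γ' * ω + δ * Γ * ω')) = 0 := by
        linear_combination 2 * hK
      rcases mul_eq_zero.mp h4 with h5 | h5
      · exact absurd h5 hD
      · rcases mul_eq_zero.mp h5 with h6 | h6
        · norm_num at h6
        · linear_combination h6
    · intro h
      funext p
      rw [aDHO, hphi, pdx_exp_aux, pdy_exp_aux, Pi.zero_apply]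
      have hcond : ω * (δ' * Γ') = -(δ * Γ) * ω' := by
        rw [div_eq_div_iff hω' (mul_ne_zero hδ' hΓ')] at h
        exact h
      have key1 : betaDHO Γ' δ' + (Γ' / ω') * (2 * A) = 0 := by
        rw [hβ', hA, hβval]
        field_simp
        ring_nf
        linear_combination (Γ*δ' - δ*Γ') * hcond
      have key2 : Complex.I * (δ' / ω') - Complex.I * alphaDHO Γ' δ' * (2 * B) = 0 := by
        rw [hα', hB, hαval]
        have hαn : Γ' / (Γ * δ' - δ * Γ') ≠ 0 := div_ne_zero hΓ' hD
        field_simp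
        ring_nf
        linear_combination (Complex.I*(δ*Γ' - Γ*δ')) * hcond
      have hre : (betaDHO Γ' δ' * (p.1:ℂ) + Complex.I * (δ' / ω') * (p.2:ℂ)) *
            Complex.exp (A * (p.1:ℂ)^2 + B * (p.2:ℂ)^2) +
          Γ' / ω' * (2 * A * (p.1:ℂ) * Complex.exp (A * (p.1:ℂ)^2 + B * (p.2:ℂ)^2)) -
          Complex.I * alphaDHO Γ' δ' * (2 * B * (p.2:ℂ) * Complex.exp (A * (p.1:ℂ)^2 + B * (p.2:ℂ)^2))
          = ((betaDHO Γ' δ' + (Γ' / ω') * (2 * A)) * (p.1:ℂ) +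
             (Complex.I * (δ' / ω') - Complex.I * alphaDHO Γ' δ' * (2 * B)) * (p.2:ℂ)) *
            Complex.exp (A * (p.1:ℂ)^2 + B * (p.2:ℂ)^2) := by ring
      rw [hre, key1, key2]
      ring
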